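/- Let 0<q<1 and k>1, A₁={w∈ℂ: q≤|w|≤1}, A₂={w∈ℂ: q^k≤|w|≤1}, g*(w)=w|w|^{k−1}, and for 0<ε<(k−1)² define g^{(ε)}:A₁→A₂ by g^{(ε)}(w)=q^{√ε}·w·|w|^{k−1−√ε} for |w|∈[q,q^{1/2}] and g^{(ε)}(w)=w·|w|^{k−1+√ε} for |w|∈[q^{1/2},1]. Then g^{(ε)} is a quasiconformal homeomorphism with g^{(ε)}=g* on ∂A₁, K(w,g^{(ε)})=k−√ε for |w|∈[q,q^{1/2}) and K(w,g^{(ε)})=k+√ε for |w|∈(q^{1/2},1], the maps g^{(ε)} are pairwise distinct for distinct ε∈(0,(k−1)²), and ∫_{A₁} K(w,g^{(ε)})/|w|² dL²(w) = ∫_{A₁} K(w,g*)/|w|² dL²(w). Hence for φ(t)=t the mean distortion functional on the annuli has infinitely many minimizers. -/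

import Mathlib

open MeasureTheory Set

/-- The Wirtinger derivative `f_z = (f_x - i f_y)/2` (computed via the real Fréchet
derivative; junk value if `f` is not differentiable at `z`). -/
noncomputable def wz (f : ℂ → ℂ) (z : ℂ) : ℂ :=
  (fderiv ℝ f z 1 - Complex.I * fderiv ℝ f z Complex.I) / 2

/-- The Wirtinger derivative `f_z̄ = (f_x + i f_y)/2`. -/
noncomputable def wzbar (f : ℂ → ℂ) (z : ℂ) : ℂ :=
  (fderiv ℝ f z 1 + Complex.I * fderiv ℝ f z Complex.I) / 2

/-- The linear distortion `K(z,f)`. -/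
noncomputable def distK (f : ℂ → ℂ) (z : ℂ) : ℝ :=
  if ‖wzbar f z‖ < ‖wz f z‖ then
    (‖wz f z‖ + ‖wzbar f z‖) /
      (‖wz f z‖ - ‖wzbar f z‖)
  else 1

/-- The Jacobian determinant `J(z,f) = |f_z|² - |f_z̄|²`. -/
noncomputable def jacF (f : ℂ → ℂ) (z : ℂ) : ℝ :=
  ‖wz f z‖ ^ 2 - ‖wzbar f z‖ ^ 2

/-- `f` is an orientation-preserving homeomorphism of finite distortion from `A` onto `B`,
in the Sobolev class `W^{1,2}(A,B)`. -/
def FDHomeoOn (f : ℂ → ℂ) (A B : Set ℂ) : Prop :=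
  ContinuousOn f A ∧ Set.InjOn f A ∧ f '' A = B ∧
  (∀ᵐ z ∂(volume.restrict A), DifferentiableAt ℝ f z) ∧
  MemLp (fun z => ‖fderiv ℝ f z‖) 2 (volume.restrict A) ∧
  ∃ K : ℂ → ℝ, Measurable K ∧ (∀ z, 1 ≤ K z) ∧
    ∀ᵐ z ∂(volume.restrict A),
      0 ≤ jacF f z ∧
      (‖wz f z‖ + ‖wzbar f z‖) ^ 2 ≤ K z * jacF f z

/-- The annulus `{w : a ≤ |w| ≤ 1}`. -/
def annulus (a : ℝ) : Set ℂ := {w : ℂ | a ≤ ‖w‖ ∧ ‖w‖ ≤ 1}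

/-- The spiral-stretch map `g*(w) = w |w|^{k-1} exp(i θ log|w| / log q)`. -/
noncomputable def spiralStretch (q k θ : ℝ) (w : ℂ) : ℂ :=
  w * ((‖w‖ ^ (k - 1) : ℝ) : ℂ) *
    Complex.exp (Complex.I * ((θ * Real.log (‖w‖) / Real.log q : ℝ) : ℂ))

/-- The radial stretch map `g*(w) = w |w|^{k-1}`. -/
noncomputable def radialStretch (k : ℝ) (w : ℂ) : ℂ :=
  w * ((‖w‖ ^ (k - 1) : ℝ) : ℂ)

/-- The competitor map `g^{(ε)}` on the annulus: a piecewise radial stretch. -/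
noncomputable def gAnn (q k ε : ℝ) (w : ℂ) : ℂ :=
  if ‖w‖ ≤ q ^ (1 / 2 : ℝ) then
    ((q ^ Real.sqrt ε : ℝ) : ℂ) * w * ((‖w‖ ^ (k - 1 - Real.sqrt ε) : ℝ) : ℂ)
  else w * ((‖w‖ ^ (k - 1 + Real.sqrt ε) : ℝ) : ℂ)

lemma abs_rpow_eq_normSq (z : ℂ) (a : ℝ) :
    ‖z‖ ^ a = Complex.normSq z ^ (a / 2) := by
  rw [Complex.norm_def, Real.sqrt_eq_rpow, ← Real.rpow_mul (Complex.normSq_nonneg z)]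
  congr 1; ring

lemma piece_hasFDerivAt (c a : ℝ) (w : ℂ) (hw : w ≠ 0) :
    ∃ L : ℂ →L[ℝ] ℂ,
      HasFDerivAt (fun z => (c:ℂ) * z * ((‖z‖ ^ a : ℝ) : ℂ)) L w ∧
      L 1 = (c:ℂ) * ((‖w‖ ^ a : ℝ) : ℂ)
          + (c:ℂ) * w * ((a * ‖w‖ ^ (a-2) * w.re : ℝ) : ℂ) ∧
      L Complex.I = (c:ℂ) * Complex.I * ((‖w‖ ^ a : ℝ) : ℂ)
          + (c:ℂ) * w * ((a * ‖w‖ ^ (a-2) * w.im : ℝ) : ℂ) := by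
  have hN0 : Complex.normSq w ≠ 0 := by
    simpa [Complex.normSq_eq_zero] using hw
  have hD : HasFDerivAt (fun z : ℂ => z.re * z.re + z.im * z.im)
      ((Complex.reCLM.smulRight (w.re : ℝ) + Complex.reCLM.smulRight w.re) +
       (Complex.imCLM.smulRight w.im + Complex.imCLM.smulRight w.im)) w := by
    have h1 := (Complex.reCLM.hasFDerivAt (x := w)).mul (Complex.reCLM.hasFDerivAt (x := w))
    have h2 := (Complex.imCLM.hasFDerivAt (x := w)).mul (Complex.imCLM.hasFDerivAt (x := w))
    have := h1.add h2
    refine this.congr_fderiv ?_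
    ext z
    simp [Complex.reCLM, Complex.imCLM]
    ring
  have hD' : HasFDerivAt Complex.normSq
      ((Complex.reCLM.smulRight (w.re : ℝ) + Complex.reCLM.smulRight w.re) +
       (Complex.imCLM.smulRight w.im + Complex.imCLM.smulRight w.im)) w := by
    refine hD.congr_of_eventuallyEq (Filter.Eventually.of_forall fun z => ?_)
    simp [Complex.normSq_apply]
  have hr : HasDerivAt (fun x : ℝ => x ^ (a/2))
      ((a/2) * Complex.normSq w ^ (a/2 - 1)) (Complex.normSq w) :=
    Real.hasDerivAt_rpow_const (Or.inl hN0)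
  have hcomp := hr.comp_hasFDerivAt w hD'
  have hof := Complex.ofRealCLM.hasFDerivAt.comp w hcomp
  have hlin : HasFDerivAt (fun z : ℂ => (c:ℂ) * z)
      ((c:ℂ) • ContinuousLinearMap.id ℝ ℂ) w := (hasFDerivAt_id w).const_mul (c:ℂ)
  have hmul := hlin.mul hof
  refine ⟨_, hmul.congr_of_eventuallyEq (Filter.Eventually.of_forall fun z => ?_), ?_, ?_⟩
  · simp [abs_rpow_eq_normSq]
  · have e1 : ‖w‖ ^ a = Complex.normSq w ^ (a/2) := abs_rpow_eq_normSq w a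
    have e2 : ‖w‖ ^ (a-2) = Complex.normSq w ^ (a/2 - 1) := by
      rw [abs_rpow_eq_normSq]; congr 1; ring
    simp [e1, e2, Complex.ofReal_mul]
    push_cast
    ring
  · have e1 : ‖w‖ ^ a = Complex.normSq w ^ (a/2) := abs_rpow_eq_normSq w a
    have e2 : ‖w‖ ^ (a-2) = Complex.normSq w ^ (a/2 - 1) := by
      rw [abs_rpow_eq_normSq]; congr 1; ring
    simp [e1, e2, Complex.ofReal_mul]
    push_cast
    ring

lemma piece_wz (c a : ℝ) (w : ℂ) (hw : w ≠ 0)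
    (f : ℂ → ℂ) (hf : f =ᶠ[nhds w] fun z => (c:ℂ) * z * ((‖z‖ ^ a : ℝ) : ℂ)) :
    DifferentiableAt ℝ f w ∧
    wz f w = ((c * (a+2)/2 * ‖w‖ ^ a : ℝ) : ℂ) ∧
    wzbar f w = ((c * a/2 * ‖w‖ ^ (a-2) : ℝ) : ℂ) * w^2 := by
  obtain ⟨L, hL, h1, hI⟩ := piece_hasFDerivAt c a w hw
  have hF : HasFDerivAt f L w := hL.congr_of_eventuallyEq hf
  have habspos : 0 < ‖w‖ := by simpa using hw
  have hkey : ‖w‖ ^ (a-2) * (w.re*w.re + w.im*w.im) = ‖w‖ ^ a := by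
    have : (w.re*w.re + w.im*w.im) = ‖w‖ ^ (2:ℝ) := by
      rw [← Complex.normSq_apply, abs_rpow_eq_normSq,
        show (2:ℝ)/2 = 1 by norm_num, Real.rpow_one]
    rw [this, ← Real.rpow_add habspos]
    congr 1; ring
  refine ⟨hF.differentiableAt, ?_, ?_⟩
  · rw [wz, hF.fderiv, h1, hI, Complex.ext_iff]
    constructor <;>
      simp only [pow_two, Complex.add_re, Complex.add_im, Complex.sub_re, Complex.sub_im,
        Complex.mul_re, Complex.mul_im, Complex.div_re, Complex.div_im, Complex.I_re,
        Complex.I_im, Complex.ofReal_re, Complex.ofReal_im, Complex.normSq_apply,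
        Complex.ofReal_mul, Complex.re_ofNat, Complex.im_ofNat] <;>
      set T := ‖w‖ ^ (a-2) with hT <;>
      set A := ‖w‖ ^ a with hA
    · linear_combination (a*c/2) * hkey
    · linear_combination 0 * hkey
  · rw [wzbar, hF.fderiv, h1, hI, Complex.ext_iff]
    constructor <;>
      simp only [pow_two, Complex.add_re, Complex.add_im, Complex.sub_re, Complex.sub_im,
        Complex.mul_re, Complex.mul_im, Complex.div_re, Complex.div_im, Complex.I_re,
        Complex.I_im, Complex.ofReal_re, Complex.ofReal_im, Complex.normSq_apply,
        Complex.ofReal_mul, Complex.re_ofNat, Complex.im_ofNat] <;>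
      set T := ‖w‖ ^ (a-2) with hT <;>
      set A := ‖w‖ ^ a with hA
    · linear_combination 0 * hkey
    · linear_combination 0 * hkey

lemma distK_ge_one (f : ℂ → ℂ) (w : ℂ) : 1 ≤ distK f w := by
  rw [distK]
  split_ifs with h
  · rw [le_div_iff₀ (by linarith)]
    have := norm_nonneg (wzbar f w)
    linarith
  · exact le_refl 1

lemma distortion_ineq (f : ℂ → ℂ) (w : ℂ)
    (h : ‖wzbar f w‖ < ‖wz f w‖) :
    0 ≤ jacF f w ∧
    (‖wz f w‖ + ‖wzbar f w‖) ^ 2 = distK f w * jacF f w := by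
  have h0 := norm_nonneg (wzbar f w)
  constructor
  · rw [jacF]; nlinarith
  · rw [distK, if_pos h, jacF, div_mul_eq_mul_div, eq_div_iff (by linarith)]
    ring

lemma fderiv_opNorm_le (f : ℂ → ℂ) (w : ℂ) :
    ‖fderiv ℝ f w‖ ≤ 2 * (‖wz f w‖ + ‖wzbar f w‖) := by
  set L := fderiv ℝ f w with hL
  have h1 : L 1 = wz f w + wzbar f w := by rw [wz, wzbar]; ring
  have hI : L Complex.I = Complex.I * (wz f w - wzbar f w) := by
    rw [wz, wzbar]
    linear_combination (fderiv ℝ f w Complex.I) * Complex.I_sq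
  refine ContinuousLinearMap.opNorm_le_bound L (by positivity) fun h => ?_
  have hdecomp : h = h.re • (1:ℂ) + h.im • Complex.I := by
    simp [Complex.ext_iff]
  calc ‖L h‖ = ‖h.re • L 1 + h.im • L Complex.I‖ := by
        rw [← L.map_smul, ← L.map_smul, ← L.map_add, ← hdecomp]
      _ ≤ ‖h.re • L 1‖ + ‖h.im • L Complex.I‖ := norm_add_le _ _
      _ = |h.re| * ‖L 1‖ + |h.im| * ‖L Complex.I‖ := by
        simp [norm_smul]
      _ ≤ ‖h‖ * (‖L 1‖ + ‖L Complex.I‖) := by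
        have hre := Complex.abs_re_le_norm h
        have him := Complex.abs_im_le_norm h
        have : ‖h‖ = ‖h‖ := rfl
        nlinarith [norm_nonneg (L 1), norm_nonneg (L Complex.I)]
      _ ≤ 2 * (‖wz f w‖ + ‖wzbar f w‖) * ‖h‖ := by
        have e1 : ‖L 1‖ ≤ ‖wz f w‖ + ‖wzbar f w‖ := by
          rw [h1]; exact norm_add_le _ _
        have e2 : ‖L Complex.I‖ ≤ ‖wz f w‖ + ‖wzbar f w‖ := by
          rw [hI]
          calc ‖Complex.I * (wz f w - wzbar f w)‖
              = ‖wz f w - wzbar f w‖ := by simp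
            _ ≤ _ := norm_sub_le _ _
        have := norm_nonneg h
        nlinarith


lemma piece_distK (c a : ℝ) (hc : 0 < c) (ha : 0 < a) (w : ℂ) (hw : w ≠ 0)
    (f : ℂ → ℂ) (hf : f =ᶠ[nhds w] fun z => (c:ℂ) * z * ((‖z‖ ^ a : ℝ) : ℂ)) :
    DifferentiableAt ℝ f w ∧ distK f w = a + 1 ∧
    ‖wzbar f w‖ < ‖wz f w‖ ∧
    ‖wz f w‖ + ‖wzbar f w‖ = c * (a+1) * ‖w‖ ^ a := by
  obtain ⟨hdiff, hz, hzb⟩ := piece_wz c a w hw f hf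
  have habspos : 0 < ‖w‖ := by simpa using hw
  have hA : 0 < ‖w‖ ^ a := Real.rpow_pos_of_pos habspos a
  have habs2 : ‖w‖ ^ (a-2) * ‖w‖ ^ (2:ℕ) = ‖w‖ ^ a := by
    rw [← Real.rpow_natCast (‖w‖) 2, ← Real.rpow_add habspos]
    congr 1; push_cast; ring
  have ez : ‖wz f w‖ = c * (a+2)/2 * ‖w‖ ^ a := by
    rw [hz, Complex.norm_of_nonneg (by positivity)]
  have ezb : ‖wzbar f w‖ = c * a/2 * ‖w‖ ^ a := by
    rw [hzb, norm_mul, Complex.norm_of_nonneg (by positivity), norm_pow,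
      mul_assoc, habs2]
  have hlt : ‖wzbar f w‖ < ‖wz f w‖ := by
    rw [ez, ezb]
    have : c * a / 2 < c * (a+2)/2 := by nlinarith
    nlinarith
  refine ⟨hdiff, ?_, hlt, ?_⟩
  · rw [distK, if_pos hlt, ez, ezb]
    rw [div_eq_iff (by nlinarith)]
    ring
  · rw [ez, ezb]; ring

lemma rpow_key (q e b : ℝ) (hq0 : 0 < q) :
    q ^ e * (q ^ (1/2:ℝ)) ^ (b - e) = (q ^ (1/2:ℝ)) ^ (b + e) := by
  rw [← Real.rpow_mul hq0.le, ← Real.rpow_mul hq0.le, ← Real.rpow_add hq0]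
  congr 1; ring

noncomputable def mAnn (q k ε : ℝ) (r : ℝ) : ℝ :=
  if r ≤ q ^ (1/2:ℝ) then q ^ Real.sqrt ε * r ^ (k - Real.sqrt ε)
  else r ^ (k + Real.sqrt ε)

section Ann
variable {q k ε : ℝ}

lemma sqrt_eps_lt (hk : 1 < k) (hε : ε ∈ Set.Ioo (0:ℝ) ((k-1)^2)) :
    0 < Real.sqrt ε ∧ Real.sqrt ε < k - 1 := by
  refine ⟨Real.sqrt_pos.mpr hε.1, ?_⟩
  have := Real.sqrt_lt_sqrt hε.1.le hε.2
  rwa [Real.sqrt_sq (by linarith)] at this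

lemma s_facts (hq0 : 0 < q) (hq1 : q < 1) :
    0 < q ^ (1/2:ℝ) ∧ q ^ (1/2:ℝ) < 1 ∧ q < q ^ (1/2:ℝ) := by
  refine ⟨Real.rpow_pos_of_pos hq0 _, Real.rpow_lt_one hq0.le hq1 (by norm_num), ?_⟩
  nth_rewrite 1 [show q = q ^ (1:ℝ) by rw [Real.rpow_one]]
  exact Real.rpow_lt_rpow_of_exponent_gt hq0 hq1 (by norm_num)

lemma gAnn_eq_m (hq0 : 0 < q) {w : ℂ} (hw : w ≠ 0) :
    gAnn q k ε w = ((mAnn q k ε (‖w‖) / ‖w‖ : ℝ) : ℂ) * w := by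
  have habspos : 0 < ‖w‖ := by simpa using hw
  rw [gAnn, mAnn]
  split_ifs with h
  · have : ‖w‖ ^ (k - Real.sqrt ε) / ‖w‖
        = ‖w‖ ^ (k - 1 - Real.sqrt ε) := by
      rw [show k - 1 - Real.sqrt ε = (k - Real.sqrt ε) - 1 by ring,
        Real.rpow_sub habspos (k - Real.sqrt ε) 1, Real.rpow_one]
    rw [mul_div_assoc, this]
    push_cast
    ring
  · have : ‖w‖ ^ (k + Real.sqrt ε) / ‖w‖
        = ‖w‖ ^ (k - 1 + Real.sqrt ε) := by
      rw [show k - 1 + Real.sqrt ε = (k + Real.sqrt ε) - 1 by ring,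
        Real.rpow_sub habspos (k + Real.sqrt ε) 1, Real.rpow_one]
    rw [this]
    push_cast
    ring

lemma mAnn_pos (hq0 : 0 < q) {r : ℝ} (hr : 0 < r) : 0 < mAnn q k ε r := by
  rw [mAnn]; split_ifs with h
  · positivity
  · positivity

lemma abs_gAnn (hq0 : 0 < q) {w : ℂ} (hw : w ≠ 0) :
    ‖gAnn q k ε w‖ = mAnn q k ε (‖w‖) := by
  have habspos : 0 < ‖w‖ := by simpa using hw
  have hm := mAnn_pos (k := k) (ε := ε) hq0 habspos
  rw [gAnn_eq_m hq0 hw, norm_mul, Complex.norm_of_nonneg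
    (by positivity), div_mul_cancel₀ _ (ne_of_gt habspos)]

lemma mAnn_strictMono (hq0 : 0 < q) (hq1 : q < 1) (hk : 1 < k)
    (hε : ε ∈ Set.Ioo (0:ℝ) ((k-1)^2)) :
    StrictMonoOn (mAnn q k ε) (Set.Ioi (0:ℝ)) := by
  obtain ⟨he0, hek⟩ := sqrt_eps_lt hk hε
  obtain ⟨hs0, hs1, hqs⟩ := s_facts hq0 hq1
  have hkm : 0 < k - Real.sqrt ε := by linarith
  have hkp : 0 < k + Real.sqrt ε := by linarith
  have hbd : q ^ Real.sqrt ε * (q ^ (1/2:ℝ)) ^ (k - Real.sqrt ε)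
      = (q ^ (1/2:ℝ)) ^ (k + Real.sqrt ε) := rpow_key q (Real.sqrt ε) k hq0
  intro r1 h1 r2 h2 h12
  simp only [Set.mem_Ioi] at h1 h2
  rw [mAnn, mAnn]
  split_ifs with ha hb hb
  · exact mul_lt_mul_of_pos_left
      (Real.rpow_lt_rpow h1.le h12 hkm) (Real.rpow_pos_of_pos hq0 _)
  · calc q ^ Real.sqrt ε * r1 ^ (k - Real.sqrt ε)
        ≤ q ^ Real.sqrt ε * (q ^ (1/2:ℝ)) ^ (k - Real.sqrt ε) :=
          mul_le_mul_of_nonneg_left (Real.rpow_le_rpow h1.le ha hkm.le)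
            (Real.rpow_pos_of_pos hq0 _).le
      _ = (q ^ (1/2:ℝ)) ^ (k + Real.sqrt ε) := hbd
      _ < r2 ^ (k + Real.sqrt ε) := Real.rpow_lt_rpow hs0.le (lt_of_not_ge hb) hkp
  · exact absurd (h12.trans_le hb) (not_lt.mpr (le_of_not_ge ha))
  · exact Real.rpow_lt_rpow h1.le h12 hkp

lemma mAnn_continuous (hq0 : 0 < q) (hq1 : q < 1) (hk : 1 < k)
    (hε : ε ∈ Set.Ioo (0:ℝ) ((k-1)^2)) : Continuous (mAnn q k ε) := by
  obtain ⟨he0, hek⟩ := sqrt_eps_lt hk hε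
  refine Continuous.if_le ?_ ?_ continuous_id continuous_const ?_
  · exact continuous_const.mul (Real.continuous_rpow_const (by linarith))
  · exact Real.continuous_rpow_const (by linarith)
  · intro r hr
    rw [hr]
    exact rpow_key q (Real.sqrt ε) k hq0

lemma mAnn_q (hq0 : 0 < q) (hq1 : q < 1) : mAnn q k ε q = q ^ k := by
  obtain ⟨hs0, hs1, hqs⟩ := s_facts hq0 hq1
  rw [mAnn, if_pos hqs.le, ← Real.rpow_add hq0]
  congr 1; ring

lemma mAnn_one (hq0 : 0 < q) (hq1 : q < 1) : mAnn q k ε 1 = 1 := by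
  obtain ⟨hs0, hs1, hqs⟩ := s_facts hq0 hq1
  rw [mAnn, if_neg (by linarith), Real.one_rpow]

end Ann

section Ann2
variable {q k ε : ℝ}

lemma distK_gAnn_inner (hq0 : 0 < q) (hq1 : q < 1) (hk : 1 < k)
    (hε : ε ∈ Set.Ioo (0:ℝ) ((k-1)^2)) {w : ℂ} (hw0 : w ≠ 0)
    (hw : ‖w‖ < q ^ (1/2:ℝ)) :
    distK (gAnn q k ε) w = k - Real.sqrt ε ∧ DifferentiableAt ℝ (gAnn q k ε) w ∧
    ‖wzbar (gAnn q k ε) w‖ < ‖wz (gAnn q k ε) w‖ ∧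
    ‖wz (gAnn q k ε) w‖ + ‖wzbar (gAnn q k ε) w‖
      = q ^ Real.sqrt ε * (k - Real.sqrt ε) * ‖w‖ ^ (k - 1 - Real.sqrt ε) := by
  obtain ⟨he0, hek⟩ := sqrt_eps_lt hk hε
  have hop : IsOpen {z : ℂ | ‖z‖ < q ^ (1/2:ℝ)} :=
    isOpen_lt continuous_norm continuous_const
  have hev : gAnn q k ε =ᶠ[nhds w] fun z =>
      ((q ^ Real.sqrt ε : ℝ) : ℂ) * z * ((‖z‖ ^ (k - 1 - Real.sqrt ε) : ℝ) : ℂ) := by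
    filter_upwards [hop.mem_nhds hw] with z hz
    rw [gAnn, if_pos (le_of_lt hz)]
  obtain ⟨hd, hK, hlt, hsum⟩ := piece_distK (q ^ Real.sqrt ε) (k - 1 - Real.sqrt ε)
    (Real.rpow_pos_of_pos hq0 _) (by linarith) w hw0 _ hev
  refine ⟨by rw [hK]; ring, hd, hlt, by rw [hsum]; ring_nf⟩

lemma distK_gAnn_outer (hq0 : 0 < q) (hq1 : q < 1) (hk : 1 < k)
    (hε : ε ∈ Set.Ioo (0:ℝ) ((k-1)^2)) {w : ℂ} (hw0 : w ≠ 0)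
    (hw : q ^ (1/2:ℝ) < ‖w‖) :
    distK (gAnn q k ε) w = k + Real.sqrt ε ∧ DifferentiableAt ℝ (gAnn q k ε) w ∧
    ‖wzbar (gAnn q k ε) w‖ < ‖wz (gAnn q k ε) w‖ ∧
    ‖wz (gAnn q k ε) w‖ + ‖wzbar (gAnn q k ε) w‖
      = (k + Real.sqrt ε) * ‖w‖ ^ (k - 1 + Real.sqrt ε) := by
  obtain ⟨he0, hek⟩ := sqrt_eps_lt hk hε
  have hop : IsOpen {z : ℂ | q ^ (1/2:ℝ) < ‖z‖} :=
    isOpen_lt continuous_const continuous_norm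
  have hev : gAnn q k ε =ᶠ[nhds w] fun z =>
      ((1 : ℝ) : ℂ) * z * ((‖z‖ ^ (k - 1 + Real.sqrt ε) : ℝ) : ℂ) := by
    filter_upwards [hop.mem_nhds hw] with z hz
    rw [gAnn, if_neg (not_le.mpr hz)]
    push_cast
    ring
  obtain ⟨hd, hK, hlt, hsum⟩ := piece_distK 1 (k - 1 + Real.sqrt ε)
    one_pos (by linarith) w hw0 _ hev
  refine ⟨by rw [hK]; ring, hd, hlt, by rw [hsum]; ring_nf⟩

lemma distK_radial (hk : 1 < k) {w : ℂ} (hw0 : w ≠ 0) :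
    distK (radialStretch k) w = k := by
  have hev : radialStretch k =ᶠ[nhds w] fun z =>
      ((1 : ℝ) : ℂ) * z * ((‖z‖ ^ (k - 1) : ℝ) : ℂ) :=
    Filter.Eventually.of_forall fun z => by rw [radialStretch]; push_cast; ring
  obtain ⟨hd, hK, hlt, hsum⟩ := piece_distK 1 (k - 1) one_pos (by linarith) w hw0 _ hev
  rw [hK]; ring

lemma gAnn_continuous (hq0 : 0 < q) (hq1 : q < 1) (hk : 1 < k)
    (hε : ε ∈ Set.Ioo (0:ℝ) ((k-1)^2)) : Continuous (gAnn q k ε) := by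
  obtain ⟨he0, hek⟩ := sqrt_eps_lt hk hε
  have habs : ∀ b : ℝ, 0 < b → Continuous fun z : ℂ => ((‖z‖ ^ b : ℝ) : ℂ) :=
    fun b hb => Complex.continuous_ofReal.comp
      ((Real.continuous_rpow_const hb.le).comp continuous_norm)
  refine Continuous.if_le ?_ ?_ continuous_norm continuous_const ?_
  · exact (continuous_const.mul continuous_id).mul (habs _ (by linarith))
  · exact continuous_id.mul (habs _ (by linarith))
  · intro z hz
    have key := rpow_key q (Real.sqrt ε) (k - 1) hq0
    rw [hz]
    rw [mul_comm ((q ^ Real.sqrt ε : ℝ) : ℂ) z, mul_assoc, ← Complex.ofReal_mul, key]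

end Ann2

section Ann3
variable {q k ε : ℝ}

lemma mem_annulus_ne_zero (hq0 : 0 < q) {w : ℂ} (hw : w ∈ annulus q) : w ≠ 0 := by
  intro h
  rw [annulus, Set.mem_setOf_eq, h] at hw
  simp at hw
  linarith

lemma gAnn_injOn (hq0 : 0 < q) (hq1 : q < 1) (hk : 1 < k)
    (hε : ε ∈ Set.Ioo (0:ℝ) ((k-1)^2)) : Set.InjOn (gAnn q k ε) (annulus q) := by
  intro w1 h1 w2 h2 heq
  have hw1 : w1 ≠ 0 := mem_annulus_ne_zero hq0 h1
  have hw2 : w2 ≠ 0 := mem_annulus_ne_zero hq0 h2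
  have ha1 : 0 < ‖w1‖ := by simpa using hw1
  have ha2 : 0 < ‖w2‖ := by simpa using hw2
  have habs : mAnn q k ε (‖w1‖) = mAnn q k ε (‖w2‖) := by
    rw [← abs_gAnn hq0 hw1, ← abs_gAnn hq0 hw2, heq]
  have hr : ‖w1‖ = ‖w2‖ :=
    (mAnn_strictMono hq0 hq1 hk hε).injOn ha1 ha2 habs
  rw [gAnn_eq_m hq0 hw1, gAnn_eq_m hq0 hw2, hr] at heq
  have hcoef : ((mAnn q k ε (‖w2‖) / ‖w2‖ : ℝ) : ℂ) ≠ 0 := by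
    rw [Complex.ofReal_ne_zero]
    exact ne_of_gt (div_pos (mAnn_pos hq0 ha2) ha2)
  exact mul_left_cancel₀ hcoef heq

lemma gAnn_image (hq0 : 0 < q) (hq1 : q < 1) (hk : 1 < k)
    (hε : ε ∈ Set.Ioo (0:ℝ) ((k-1)^2)) :
    gAnn q k ε '' annulus q = annulus (q ^ k) := by
  have hmono := mAnn_strictMono (ε := ε) hq0 hq1 hk hε
  ext v
  constructor
  · rintro ⟨w, hw, rfl⟩
    have hw0 : w ≠ 0 := mem_annulus_ne_zero hq0 hw
    have ha : 0 < ‖w‖ := by simpa using hw0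
    obtain ⟨hwq, hw1⟩ := hw
    rw [annulus, Set.mem_setOf_eq, abs_gAnn hq0 hw0]
    constructor
    · rw [← mAnn_q (k := k) (ε := ε) hq0 hq1]
      rcases eq_or_lt_of_le hwq with h | h
      · rw [← h]
      · exact (hmono (Set.mem_Ioi.mpr hq0) (Set.mem_Ioi.mpr ha) h).le
    · rw [← mAnn_one (q := q) (k := k) (ε := ε) hq0 hq1]
      rcases eq_or_lt_of_le hw1 with h | h
      · rw [h]
      · exact (hmono (Set.mem_Ioi.mpr ha) (Set.mem_Ioi.mpr one_pos) h).le
  · rintro ⟨hv1, hv2⟩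
    have hqk : 0 < q ^ k := Real.rpow_pos_of_pos hq0 k
    have hv0 : 0 < ‖v‖ := lt_of_lt_of_le hqk hv1
    have hIVT := intermediate_value_Icc (le_of_lt hq1)
      ((mAnn_continuous (ε := ε) hq0 hq1 hk hε).continuousOn)
    have hmem : ‖v‖ ∈ Set.Icc (mAnn q k ε q) (mAnn q k ε 1) := by
      rw [mAnn_q hq0 hq1, mAnn_one hq0 hq1]
      exact ⟨hv1, hv2⟩
    obtain ⟨r, hr, hmr⟩ := hIVT hmem
    have hr0 : 0 < r := lt_of_lt_of_le hq0 hr.1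
    set w : ℂ := ((r / ‖v‖ : ℝ) : ℂ) * v with hwdef
    have habsw : ‖w‖ = r := by
      rw [hwdef, norm_mul, Complex.norm_of_nonneg (by positivity),
        div_mul_cancel₀ _ (ne_of_gt hv0)]
    have hw0 : w ≠ 0 := by
      intro h
      rw [h] at habsw
      simp at habsw
      linarith
    refine ⟨w, ⟨by rw [habsw]; exact hr.1, by rw [habsw]; exact hr.2⟩, ?_⟩
    rw [gAnn_eq_m hq0 hw0, habsw, hmr, hwdef, ← mul_assoc, ← Complex.ofReal_mul,
      div_mul_div_comm, mul_comm (‖v‖) r, div_self (by positivity), Complex.ofReal_one,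
      one_mul]

end Ann3

lemma annulus_eq_preimage (a : ℝ) : annulus a = (norm : ℂ → ℝ) ⁻¹' (Set.Icc a 1) := rfl

lemma annulus_measurable (a : ℝ) : MeasurableSet (annulus a) := by
  rw [annulus_eq_preimage]
  exact measurableSet_Icc.preimage continuous_norm.measurable

lemma annulus_volume_lt_top (a : ℝ) : volume (annulus a) < ⊤ := by
  refine lt_of_le_of_lt (measure_mono (fun z hz => ?_)) (measure_closedBall_lt_top (x := (0:ℂ)) (r := 1))
  rw [Metric.mem_closedBall, dist_zero_right]
  exact hz.2

lemma sphere_null (s : ℝ) : volume {z : ℂ | ‖z‖ = s} = 0 := by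
  have : {z : ℂ | ‖z‖ = s} = Metric.sphere (0:ℂ) s := by
    ext z
    simp [Metric.mem_sphere, Complex.dist_eq]
  rw [this]
  exact Measure.addHaar_sphere volume 0 s

lemma wz_measurable (f : ℂ → ℂ) : Measurable (wz f) := by
  have h1 : Measurable fun z => fderiv ℝ f z 1 := measurable_fderiv_apply_const ℝ f 1
  have hI : Measurable fun z => fderiv ℝ f z Complex.I := measurable_fderiv_apply_const ℝ f Complex.I
  exact ((h1.sub (hI.const_mul Complex.I)).div_const 2)

lemma wzbar_measurable (f : ℂ → ℂ) : Measurable (wzbar f) := by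
  have h1 : Measurable fun z => fderiv ℝ f z 1 := measurable_fderiv_apply_const ℝ f 1
  have hI : Measurable fun z => fderiv ℝ f z Complex.I := measurable_fderiv_apply_const ℝ f Complex.I
  exact ((h1.add (hI.const_mul Complex.I)).div_const 2)

lemma distK_measurable (f : ℂ → ℂ) : Measurable (distK f) := by
  have ha : Measurable fun z => ‖wz f z‖ :=
    continuous_norm.measurable.comp (wz_measurable f)
  have hb : Measurable fun z => ‖wzbar f z‖ :=
    continuous_norm.measurable.comp (wzbar_measurable f)
  have hset : MeasurableSet {z : ℂ | ‖wzbar f z‖ < ‖wz f z‖} :=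
    measurableSet_lt hb ha
  exact Measurable.ite hset ((ha.add hb).div (ha.sub hb)) measurable_const

section Ann4
variable {q k ε : ℝ}

lemma ae_ne_sphere (s : ℝ) : ∀ᵐ w : ℂ ∂volume, ‖w‖ ≠ s := by
  rw [ae_iff]
  convert sphere_null s using 2
  simp [not_not]

lemma gAnn_ae_package (hq0 : 0 < q) (hq1 : q < 1) (hk : 1 < k)
    (hε : ε ∈ Set.Ioo (0:ℝ) ((k-1)^2)) :
    ∀ᵐ w ∂(volume.restrict (annulus q)),
      DifferentiableAt ℝ (gAnn q k ε) w ∧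
      ‖wzbar (gAnn q k ε) w‖ < ‖wz (gAnn q k ε) w‖ ∧
      distK (gAnn q k ε) w ≤ k + Real.sqrt ε ∧
      ‖wz (gAnn q k ε) w‖ + ‖wzbar (gAnn q k ε) w‖ ≤ 2 * k ∧
      distK (gAnn q k ε) w =
        (if ‖w‖ < q ^ (1/2:ℝ) then k - Real.sqrt ε else k + Real.sqrt ε) := by
  obtain ⟨he0, hek⟩ := sqrt_eps_lt hk hε
  rw [ae_restrict_iff' (annulus_measurable q)]
  filter_upwards [ae_ne_sphere (q ^ (1/2:ℝ))] with w hws hw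
  obtain ⟨hw1, hw2⟩ := hw
  have hw0 : w ≠ 0 := mem_annulus_ne_zero hq0 ⟨hw1, hw2⟩
  rcases lt_or_gt_of_ne hws with h | h
  · obtain ⟨hK, hd, hlt, hsum⟩ := distK_gAnn_inner hq0 hq1 hk hε hw0 h
    refine ⟨hd, hlt, by rw [hK]; linarith, ?_, by rw [if_pos h]; exact hK⟩
    rw [hsum]
    have e1 : q ^ Real.sqrt ε ≤ 1 := Real.rpow_le_one hq0.le hq1.le he0.le
    have e2 : ‖w‖ ^ (k - 1 - Real.sqrt ε) ≤ 1 :=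
      Real.rpow_le_one (norm_nonneg w) hw2 (by linarith)
    have e3 : 0 < ‖w‖ ^ (k - 1 - Real.sqrt ε) :=
      Real.rpow_pos_of_pos (by simpa using hw0) _
    have e0 : 0 < q ^ Real.sqrt ε := Real.rpow_pos_of_pos hq0 _
    have hkpos : (0:ℝ) < k - Real.sqrt ε := by linarith
    calc q ^ Real.sqrt ε * (k - Real.sqrt ε) * ‖w‖ ^ (k - 1 - Real.sqrt ε)
        ≤ 1 * (k - Real.sqrt ε) * 1 :=
          mul_le_mul (mul_le_mul e1 le_rfl hkpos.le zero_le_one) e2 e3.le (by positivity)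
      _ ≤ 2 * k := by linarith
  · obtain ⟨hK, hd, hlt, hsum⟩ := distK_gAnn_outer hq0 hq1 hk hε hw0 h
    refine ⟨hd, hlt, by rw [hK], ?_, by rw [if_neg (not_lt.mpr h.le)]; exact hK⟩
    rw [hsum]
    have e2 : ‖w‖ ^ (k - 1 + Real.sqrt ε) ≤ 1 :=
      Real.rpow_le_one (norm_nonneg w) hw2 (by linarith)
    have e3 : 0 < ‖w‖ ^ (k - 1 + Real.sqrt ε) :=
      Real.rpow_pos_of_pos (by simpa using hw0) _
    have hkpos : (0:ℝ) < k + Real.sqrt ε := by linarith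
    calc (k + Real.sqrt ε) * ‖w‖ ^ (k - 1 + Real.sqrt ε)
        ≤ (k + Real.sqrt ε) * 1 := mul_le_mul_of_nonneg_left e2 hkpos.le
      _ ≤ 2 * k := by linarith

lemma gAnn_fdhomeo (hq0 : 0 < q) (hq1 : q < 1) (hk : 1 < k)
    (hε : ε ∈ Set.Ioo (0:ℝ) ((k-1)^2)) :
    FDHomeoOn (gAnn q k ε) (annulus q) (annulus (q ^ k)) := by
  haveI : IsFiniteMeasure (volume.restrict (annulus q)) :=
    ⟨by rw [Measure.restrict_apply_univ]; exact annulus_volume_lt_top q⟩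
  refine ⟨(gAnn_continuous hq0 hq1 hk hε).continuousOn,
    gAnn_injOn hq0 hq1 hk hε, gAnn_image hq0 hq1 hk hε,
    (gAnn_ae_package hq0 hq1 hk hε).mono fun w hw => hw.1, ?_, ?_⟩
  · refine MemLp.of_bound ((measurable_fderiv ℝ _).norm.aestronglyMeasurable) (4 * k) ?_
    filter_upwards [gAnn_ae_package hq0 hq1 hk hε] with w hw
    rw [Real.norm_eq_abs, abs_of_nonneg (norm_nonneg _)]
    calc ‖fderiv ℝ (gAnn q k ε) w‖
        ≤ 2 * (‖wz (gAnn q k ε) w‖ + ‖wzbar (gAnn q k ε) w‖) :=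
          fderiv_opNorm_le _ _
      _ ≤ 4 * k := by linarith [hw.2.2.2.1]
  · refine ⟨distK (gAnn q k ε), distK_measurable _, distK_ge_one _, ?_⟩
    filter_upwards [gAnn_ae_package hq0 hq1 hk hε] with w hw
    obtain ⟨hjac, heq⟩ := distortion_ineq _ _ hw.2.1
    exact ⟨hjac, le_of_eq heq⟩

end Ann4

section Ann5
variable {q k ε : ℝ}

lemma frontier_annulus_subset (hq0 : 0 < q) :
    frontier (annulus q) ⊆ {w : ℂ | ‖w‖ = q ∨ ‖w‖ = 1} := by
  have hclosed : IsClosed (annulus q) := by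
    rw [annulus_eq_preimage]
    exact isClosed_Icc.preimage continuous_norm
  have hopen : IsOpen ((norm : ℂ → ℝ) ⁻¹' (Set.Ioo q 1)) :=
    isOpen_Ioo.preimage continuous_norm
  intro w hw
  have h1 : w ∈ annulus q := by
    rw [← hclosed.closure_eq]
    exact hw.1
  have h2 : w ∉ (norm : ℂ → ℝ) ⁻¹' (Set.Ioo q 1) := by
    intro hmem
    exact hw.2 (interior_maximal (fun z hz => show _ ∧ _ from ⟨hz.1.le, hz.2.le⟩) hopen hmem)
  rcases eq_or_lt_of_le h1.1 with h | h
  · exact Or.inl h.symm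
  · rcases eq_or_lt_of_le h1.2 with h' | h'
    · exact Or.inr h'
    · exact absurd ⟨h, h'⟩ h2

lemma gAnn_eq_radial_frontier (hq0 : 0 < q) (hq1 : q < 1) (hk : 1 < k)
    (hε : ε ∈ Set.Ioo (0:ℝ) ((k-1)^2)) :
    Set.EqOn (gAnn q k ε) (radialStretch k) (frontier (annulus q)) := by
  obtain ⟨hs0, hs1, hqs⟩ := s_facts hq0 hq1
  intro w hw
  rcases frontier_annulus_subset hq0 hw with h | h
  · rw [gAnn, if_pos (by rw [h]; exact hqs.le), radialStretch, h,
      mul_comm ((q ^ Real.sqrt ε : ℝ) : ℂ) w, mul_assoc, ← Complex.ofReal_mul,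
      ← Real.rpow_add hq0]
    congr 3
    ring
  · rw [gAnn, if_neg (by rw [h]; exact not_le.mpr hs1), radialStretch, h,
      Real.one_rpow, Real.one_rpow]

lemma gAnn_distinct (hq0 : 0 < q) (hq1 : q < 1) (hk : 1 < k)
    (hε : ε ∈ Set.Ioo (0:ℝ) ((k-1)^2)) {ε' : ℝ} (hε' : ε' ∈ Set.Ioo (0:ℝ) ((k-1)^2))
    (hne : ε ≠ ε') : gAnn q k ε ≠ gAnn q k ε' := by
  intro hfun
  obtain ⟨hs0, hs1, hqs⟩ := s_facts hq0 hq1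
  set w0 : ℂ := ((q ^ (3/4:ℝ) : ℝ) : ℂ) with hw0
  have habs : ‖w0‖ = q ^ (3/4:ℝ) := by
    rw [hw0, Complex.norm_of_nonneg (Real.rpow_pos_of_pos hq0 _).le]
  have hle : ‖w0‖ ≤ q ^ (1/2:ℝ) := by
    rw [habs]
    exact Real.rpow_le_rpow_of_exponent_ge hq0 hq1.le (by norm_num)
  have hval : ∀ e : ℝ, gAnn q k (e^2) w0
      = ((q ^ (Real.sqrt (e^2) + 3/4 + 3/4 * (k - 1 - Real.sqrt (e^2))) : ℝ) : ℂ) := by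
    intro e
    rw [gAnn, if_pos hle, habs, hw0, ← Real.rpow_mul hq0.le, ← Complex.ofReal_mul,
      ← Complex.ofReal_mul, ← Real.rpow_add hq0, ← Real.rpow_add hq0]
  have h1 := hval (Real.sqrt ε)
  have h2 := hval (Real.sqrt ε')
  rw [Real.sq_sqrt hε.1.le] at h1
  rw [Real.sq_sqrt hε'.1.le] at h2
  have heq : (q ^ (Real.sqrt ε + 3/4 + 3/4 * (k - 1 - Real.sqrt ε)) : ℝ)
      = q ^ (Real.sqrt ε' + 3/4 + 3/4 * (k - 1 - Real.sqrt ε')) := by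
    have := h1.symm.trans ((congrFun hfun w0).trans h2)
    exact_mod_cast this
  have hlog := congrArg Real.log heq
  rw [Real.log_rpow hq0, Real.log_rpow hq0] at hlog
  have hlogq : Real.log q ≠ 0 := ne_of_lt (Real.log_neg hq0 hq1)
  have hexp : Real.sqrt ε + 3/4 + 3/4 * (k - 1 - Real.sqrt ε)
      = Real.sqrt ε' + 3/4 + 3/4 * (k - 1 - Real.sqrt ε') :=
    mul_right_cancel₀ hlogq hlog
  have hsq : Real.sqrt ε = Real.sqrt ε' := by linarith
  exact hne ((Real.sqrt_inj hε.1.le hε'.1.le).mp hsq)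

end Ann5

section Integral
open Real

lemma integral_annulus_radial {q : ℝ} (hq0 : 0 < q) (hq1 : q ≤ 1) (G : ℝ → ℝ)
    (hG : Measurable G) (C : ℝ) (hC : ∀ r ∈ Set.Icc q 1, |G r| ≤ C) :
    ∫ w in annulus q, G (‖w‖)
      = (2 * Real.pi) * ∫ r in Set.Ioc q 1, r * G r := by
  have hAnn := annulus_measurable q
  have hS : MeasurableSet (Set.Icc q 1 ×ˢ Set.Ioo (-Real.pi) Real.pi) :=
    measurableSet_Icc.prod measurableSet_Ioo
  have hsub : Set.Icc q 1 ×ˢ Set.Ioo (-Real.pi) Real.pi ⊆ polarCoord.target := by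
    rw [polarCoord_target]
    rintro ⟨r, θ⟩ ⟨hr, hθ⟩
    exact ⟨lt_of_lt_of_le hq0 hr.1, hθ⟩
  rw [← integral_indicator hAnn, ← Complex.integral_comp_polarCoord_symm]
  have hcongr : Set.EqOn
      (fun p : ℝ × ℝ => p.1 • (annulus q).indicator (fun w => G (‖w‖))
        (Complex.polarCoord.symm p))
      (fun p : ℝ × ℝ => (Set.Icc q 1 ×ˢ Set.Ioo (-Real.pi) Real.pi).indicator
        (fun p : ℝ × ℝ => p.1 * G p.1) p)
      polarCoord.target := by
    rintro ⟨r, θ⟩ hp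
    rw [polarCoord_target] at hp
    obtain ⟨hr, hθ⟩ := hp
    have hr0 : (0:ℝ) < r := hr
    have habs : ‖Complex.polarCoord.symm (r, θ)‖ = r := by
      rw [Complex.norm_polarCoord_symm, abs_of_pos hr0]
    have hmem : Complex.polarCoord.symm (r, θ) ∈ annulus q ↔ r ∈ Set.Icc q 1 := by
      rw [annulus, Set.mem_setOf_eq, habs]
      exact Iff.rfl
    by_cases h : r ∈ Set.Icc q 1
    · have hmemT : Complex.polarCoord.symm (r, θ) ∈ annulus q := hmem.mpr h
      have hmemS : ((r, θ) : ℝ × ℝ) ∈ Set.Icc q 1 ×ˢ Set.Ioo (-Real.pi) Real.pi := ⟨h, hθ⟩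
      show r • (annulus q).indicator _ _
        = (Set.Icc q 1 ×ˢ Set.Ioo (-Real.pi) Real.pi).indicator
            (fun p : ℝ × ℝ => p.1 * G p.1) (r, θ)
      rw [Set.indicator_of_mem hmemT, Set.indicator_of_mem hmemS, habs, smul_eq_mul]
    · have hmemT : Complex.polarCoord.symm (r, θ) ∉ annulus q := fun hx => h (hmem.mp hx)
      have hmemS : ((r, θ) : ℝ × ℝ) ∉ Set.Icc q 1 ×ˢ Set.Ioo (-Real.pi) Real.pi :=
        fun hx => h hx.1
      show r • (annulus q).indicator _ _
        = (Set.Icc q 1 ×ˢ Set.Ioo (-Real.pi) Real.pi).indicator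
            (fun p : ℝ × ℝ => p.1 * G p.1) (r, θ)
      rw [Set.indicator_of_notMem hmemT, Set.indicator_of_notMem hmemS, smul_zero]
  rw [setIntegral_congr_fun polarCoord.open_target.measurableSet hcongr,
    setIntegral_indicator hS, Set.inter_eq_self_of_subset_right hsub]
  have hfin : (volume.prod volume) (Set.Icc q 1 ×ˢ Set.Ioo (-Real.pi) Real.pi) ≠ ⊤ := by
    rw [Measure.prod_prod]
    exact (ENNReal.mul_lt_top measure_Icc_lt_top measure_Ioo_lt_top).ne
  have hmble : Measurable fun p : ℝ × ℝ => p.1 * G p.1 :=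
    measurable_fst.mul (hG.comp measurable_fst)
  have hCnonneg : 0 ≤ C := le_trans (abs_nonneg _) (hC 1 ⟨hq1, le_refl 1⟩)
  have hint : IntegrableOn (fun p : ℝ × ℝ => p.1 * G p.1)
      (Set.Icc q 1 ×ˢ Set.Ioo (-Real.pi) Real.pi) (volume.prod volume) := by
    refine Measure.integrableOn_of_bounded hfin hmble.aestronglyMeasurable (M := C) ?_
    rw [ae_restrict_iff' hS]
    refine Filter.Eventually.of_forall fun p hp => ?_
    obtain ⟨hp1, _⟩ := hp
    rw [Real.norm_eq_abs, abs_mul]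
    calc |p.1| * |G p.1| ≤ 1 * C := by
          refine mul_le_mul ?_ (hC p.1 hp1) (abs_nonneg _) zero_le_one
          rw [abs_of_pos (lt_of_lt_of_le hq0 hp1.1)]
          exact hp1.2
      _ = C := one_mul C
  rw [Measure.volume_eq_prod, setIntegral_prod _ hint]
  have hinner : ∀ r : ℝ, (∫ θ in Set.Ioo (-Real.pi) Real.pi, r * G r)
      = (2 * Real.pi) * (r * G r) := by
    intro r
    rw [setIntegral_const, measureReal_def, Real.volume_Ioo, smul_eq_mul]
    congr 1
    rw [ENNReal.toReal_ofReal (by linarith [Real.pi_pos])]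
    ring
  calc (∫ r in Set.Icc q 1, ∫ θ in Set.Ioo (-Real.pi) Real.pi, r * G r)
      = ∫ r in Set.Icc q 1, (2 * Real.pi) * (r * G r) := by
        refine setIntegral_congr_fun measurableSet_Icc fun r _ => hinner r
    _ = ∫ r in Set.Ioc q 1, (2 * Real.pi) * (r * G r) := integral_Icc_eq_integral_Ioc
    _ = (2 * Real.pi) * ∫ r in Set.Ioc q 1, r * G r := integral_const_mul _ _

end Integral

section Integral2
variable {q k ε : ℝ}

lemma ae_ne_real (s : ℝ) : ∀ᵐ r : ℝ ∂volume, r ≠ s := by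
  rw [ae_iff]
  have : {a : ℝ | ¬a ≠ s} = {s} := by ext a; simp [not_not]
  rw [this]
  exact measure_singleton s

lemma integrableOn_mul_bdd (G : ℝ → ℝ) (hG : Measurable G) (a b C : ℝ)
    (hC : ∀ r ∈ Set.Ioc a b, |r * G r| ≤ C) :
    IntegrableOn (fun r => r * G r) (Set.Ioc a b) volume := by
  refine Measure.integrableOn_of_bounded measure_Ioc_lt_top.ne
    ((measurable_id.mul hG).aestronglyMeasurable) (M := C) ?_
  rw [ae_restrict_iff' measurableSet_Ioc]
  refine Filter.Eventually.of_forall fun r hr => ?_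
  rw [Real.norm_eq_abs]
  exact hC r hr

lemma setInt_inv (A a b : ℝ) (ha : 0 < a) (hab : a ≤ b) :
    ∫ r in Set.Ioc a b, A * r⁻¹ = A * (Real.log b - Real.log a) := by
  rw [integral_const_mul]
  congr 1
  have hb : 0 < b := lt_of_lt_of_le ha hab
  rw [← intervalIntegral.integral_of_le hab, integral_inv_of_pos ha hb,
    Real.log_div (ne_of_gt hb) (ne_of_gt ha)]

lemma integral_distK_gAnn (hq0 : 0 < q) (hq1 : q < 1) (hk : 1 < k)
    (hε : ε ∈ Set.Ioo (0:ℝ) ((k-1)^2)) :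
    ∫ w in annulus q, distK (gAnn q k ε) w / ‖w‖ ^ 2
      = (2 * Real.pi) * (k * (0 - Real.log q)) := by
  obtain ⟨he0, hek⟩ := sqrt_eps_lt hk hε
  obtain ⟨hs0, hs1, hqs⟩ := s_facts hq0 hq1
  set s := q ^ (1/2:ℝ) with hsdef
  set e := Real.sqrt ε with hedef
  set G : ℝ → ℝ := fun r => (if r < s then k - e else k + e) / r^2 with hGdef
  have hGm : Measurable G :=
    (Measurable.ite measurableSet_Iio measurable_const measurable_const).div
      (measurable_id.pow_const 2)
  have hstep1 : ∫ w in annulus q, distK (gAnn q k ε) w / ‖w‖ ^ 2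
      = ∫ w in annulus q, G (‖w‖) := by
    refine setIntegral_congr_ae (annulus_measurable q) ?_
    filter_upwards [ae_ne_sphere s] with w hws hw
    have hw0 : w ≠ 0 := mem_annulus_ne_zero hq0 hw
    rcases lt_or_gt_of_ne hws with h | h
    · rw [(distK_gAnn_inner hq0 hq1 hk hε hw0 h).1, hGdef]
      simp only [if_pos h, hedef]
    · rw [(distK_gAnn_outer hq0 hq1 hk hε hw0 h).1, hGdef]
      simp only [if_neg (not_lt.mpr h.le), hedef]
  have hbound : ∀ r ∈ Set.Icc q 1, |G r| ≤ (k + e) / q^2 := by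
    intro r hr
    have hr0 : 0 < r := lt_of_lt_of_le hq0 hr.1
    have hnum : (0:ℝ) < (if r < s then k - e else k + e) := by
      split_ifs <;> linarith
    rw [hGdef, abs_of_nonneg (by positivity)]
    refine div_le_div₀ (by linarith) ?_ (by positivity) ?_
    · split_ifs <;> linarith
    · nlinarith [hr.1]
  rw [hstep1, integral_annulus_radial hq0 hq1.le G hGm _ hbound]
  have hIoc1 : ∀ r ∈ Set.Ioc q s, |r * G r| ≤ (k + e) / q^2 := by
    intro r hr
    have hr0 : 0 < r := lt_of_lt_of_le hq0 hr.1.le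
    have := hbound r ⟨hr.1.le, hr.2.trans hs1.le⟩
    rw [abs_mul, abs_of_pos hr0]
    calc r * |G r| ≤ 1 * ((k + e)/q^2) :=
          mul_le_mul (hr.2.trans hs1.le) this (abs_nonneg _) zero_le_one
      _ = (k + e)/q^2 := one_mul _
  have hIoc2 : ∀ r ∈ Set.Ioc s 1, |r * G r| ≤ (k + e) / q^2 := by
    intro r hr
    have hr0 : 0 < r := lt_trans hs0 hr.1
    have := hbound r ⟨(hqs.trans hr.1).le, hr.2⟩
    rw [abs_mul, abs_of_pos hr0]
    calc r * |G r| ≤ 1 * ((k + e)/q^2) :=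
          mul_le_mul hr.2 this (abs_nonneg _) zero_le_one
      _ = (k + e)/q^2 := one_mul _
  have hint1 := integrableOn_mul_bdd G hGm q s _ hIoc1
  have hint2 := integrableOn_mul_bdd G hGm s 1 _ hIoc2
  have hsplit : Set.Ioc q 1 = Set.Ioc q s ∪ Set.Ioc s 1 :=
    (Set.Ioc_union_Ioc_eq_Ioc hqs.le hs1.le).symm
  rw [hsplit, setIntegral_union (Set.Ioc_disjoint_Ioc_of_le le_rfl) measurableSet_Ioc hint1 hint2]
  have hpart1 : ∫ r in Set.Ioc q s, r * G r = (k - e) * (Real.log s - Real.log q) := by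
    rw [← setInt_inv (k - e) q s hq0 hqs.le]
    refine setIntegral_congr_ae measurableSet_Ioc ?_
    filter_upwards [ae_ne_real s] with r hrs hr
    have hr0 : r ≠ 0 := ne_of_gt (lt_of_lt_of_le hq0 hr.1.le)
    rw [hGdef]
    simp only [if_pos (lt_of_le_of_ne hr.2 hrs)]
    field_simp
  have hpart2 : ∫ r in Set.Ioc s 1, r * G r = (k + e) * (Real.log 1 - Real.log s) := by
    rw [← setInt_inv (k + e) s 1 hs0 hs1.le]
    refine setIntegral_congr_fun measurableSet_Ioc fun r hr => ?_
    have hr0 : r ≠ 0 := ne_of_gt (lt_trans hs0 hr.1)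
    rw [hGdef]
    simp only [if_neg (not_lt.mpr hr.1.le)]
    field_simp
  rw [hpart1, hpart2, hsdef, Real.log_rpow hq0, Real.log_one]
  ring

lemma integral_distK_radial (hq0 : 0 < q) (hq1 : q < 1) (hk : 1 < k) :
    ∫ w in annulus q, distK (radialStretch k) w / ‖w‖ ^ 2
      = (2 * Real.pi) * (k * (0 - Real.log q)) := by
  set G : ℝ → ℝ := fun r => k / r^2 with hGdef
  have hGm : Measurable G := measurable_const.div (measurable_id.pow_const 2)
  have hstep1 : ∫ w in annulus q, distK (radialStretch k) w / ‖w‖ ^ 2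
      = ∫ w in annulus q, G (‖w‖) := by
    refine setIntegral_congr_fun (annulus_measurable q) fun w hw => ?_
    rw [distK_radial hk (mem_annulus_ne_zero hq0 hw), hGdef]
  have hbound : ∀ r ∈ Set.Icc q 1, |G r| ≤ k / q^2 := by
    intro r hr
    have hr0 : 0 < r := lt_of_lt_of_le hq0 hr.1
    rw [hGdef, abs_of_nonneg (by positivity)]
    exact div_le_div₀ (by linarith) (le_refl k) (by positivity) (by nlinarith [hr.1])
  rw [hstep1, integral_annulus_radial hq0 hq1.le G hGm _ hbound]
  have hpart : ∫ r in Set.Ioc q 1, r * G r = k * (Real.log 1 - Real.log q) := by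
    rw [← setInt_inv k q 1 hq0 hq1.le]
    refine setIntegral_congr_fun measurableSet_Ioc fun r hr => ?_
    have hr0 : r ≠ 0 := ne_of_gt (lt_of_lt_of_le hq0 hr.1.le)
    rw [hGdef]
    field_simp
  rw [hpart, Real.log_one]

end Integral2

/-- **Non-uniqueness of minimizers on annuli for `φ(t)=t`.** For `0<ε<(k−1)²` the maps
`g^{(ε)}` are quasiconformal homeomorphisms from `A₁` onto `A₂` agreeing with the radial
stretch `g*` on `∂A₁`, with distortion `k−√ε` on `{q ≤ |w| < q^{1/2}}` and `k+√ε` on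
`{q^{1/2} < |w| ≤ 1}`; they are pairwise distinct, yet all have the same weighted mean
distortion `∫_{A₁} K(w,·)/|w|²` as `g*`. Hence for `φ(t)=t` the mean distortion functional
on the annuli has infinitely many minimizers. -/
theorem annuli_non_uniqueness_linear_phi (q k : ℝ) (hq0 : 0 < q) (hq1 : q < 1) (hk : 1 < k) :
    (∀ ε ∈ Set.Ioo (0 : ℝ) ((k - 1) ^ 2),
      FDHomeoOn (gAnn q k ε) (annulus q) (annulus (q ^ k)) ∧
      ∃ M : ℝ, ∀ᵐ w ∂(volume.restrict (annulus q)), distK (gAnn q k ε) w ≤ M) ∧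
    (∀ ε ∈ Set.Ioo (0 : ℝ) ((k - 1) ^ 2),
      Set.EqOn (gAnn q k ε) (radialStretch k) (frontier (annulus q))) ∧
    (∀ ε ∈ Set.Ioo (0 : ℝ) ((k - 1) ^ 2), ∀ w : ℂ,
      q ≤ ‖w‖ → ‖w‖ < q ^ (1 / 2 : ℝ) →
      distK (gAnn q k ε) w = k - Real.sqrt ε) ∧
    (∀ ε ∈ Set.Ioo (0 : ℝ) ((k - 1) ^ 2), ∀ w : ℂ,
      q ^ (1 / 2 : ℝ) < ‖w‖ → ‖w‖ ≤ 1 →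
      distK (gAnn q k ε) w = k + Real.sqrt ε) ∧
    (∀ ε ∈ Set.Ioo (0 : ℝ) ((k - 1) ^ 2), ∀ ε' ∈ Set.Ioo (0 : ℝ) ((k - 1) ^ 2),
      ε ≠ ε' → gAnn q k ε ≠ gAnn q k ε') ∧
    (∀ ε ∈ Set.Ioo (0 : ℝ) ((k - 1) ^ 2),
      (∫ w in annulus q, distK (gAnn q k ε) w / ‖w‖ ^ 2)
        = ∫ w in annulus q, distK (radialStretch k) w / ‖w‖ ^ 2) := by
  refine ⟨?_, ?_, ?_, ?_, ?_, ?_⟩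
  · intro ε hε
    exact ⟨gAnn_fdhomeo hq0 hq1 hk hε, k + Real.sqrt ε,
      (gAnn_ae_package hq0 hq1 hk hε).mono fun w hw => hw.2.2.1⟩
  · intro ε hε
    exact gAnn_eq_radial_frontier hq0 hq1 hk hε
  · intro ε hε w hw1 hw2
    have hw0 : w ≠ 0 := by
      intro h; rw [h] at hw1; simp at hw1; linarith
    exact (distK_gAnn_inner hq0 hq1 hk hε hw0 hw2).1
  · intro ε hε w hw1 hw2
    have hw0 : w ≠ 0 := by
      intro h; rw [h] at hw1; simp at hw1
      linarith [Real.rpow_pos_of_pos hq0 (1/2 : ℝ)]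
    exact (distK_gAnn_outer hq0 hq1 hk hε hw0 hw1).1
  · intro ε hε ε' hε' hne
    exact gAnn_distinct hq0 hq1 hk hε hε' hne
  · intro ε hε
    rw [integral_distK_gAnn hq0 hq1 hk hε, integral_distK_radial hq0 hq1 hk]
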